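/- Let r : A → B be a homomorphism of abelian groups such that r ⊗ ℚ is surjective and r ⊗ ℚ/ℤ is injective. Then r ⊗ ℚ/ℤ is an isomorphism. -/
import Mathlib

open TensorProduct

/-- If `r : A → B` is a homomorphism of abelian groups such that `r ⊗ ℚ` is surjective and
`r ⊗ ℚ/ℤ` is injective, then `r ⊗ ℚ/ℤ` is an isomorphism (i.e. bijective). -/
theorem stmt_2 (A B : Type) [AddCommGroup A] [AddCommGroup B] (r : A →+ B)
    (hQ : Function.Surjective (LinearMap.rTensor ℚ r.toIntLinearMap))
    (hQZ : Function.Injective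
      (LinearMap.rTensor (ℚ ⧸ AddSubgroup.zmultiples (1 : ℚ)) r.toIntLinearMap)) :
    Function.Bijective
      (LinearMap.rTensor (ℚ ⧸ AddSubgroup.zmultiples (1 : ℚ)) r.toIntLinearMap) := by
  refine ⟨hQZ, ?_⟩
  set Q := ℚ ⧸ AddSubgroup.zmultiples (1 : ℚ)
  let π : ℚ →ₗ[ℤ] Q := (QuotientAddGroup.mk' _).toIntLinearMap
  have hπ : Function.Surjective π := QuotientAddGroup.mk'_surjective _
  have h1 : Function.Surjective (LinearMap.lTensor B π) :=
    LinearMap.lTensor_surjective B hπ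
  intro x
  obtain ⟨y, hy⟩ := h1 x
  obtain ⟨z, hz⟩ := hQ y
  refine ⟨LinearMap.lTensor A π z, ?_⟩
  have h2 := congrArg (fun f => f z)
    (LinearMap.rTensor_comp_lTensor (f := r.toIntLinearMap) (g := π))
  have h3 := congrArg (fun f => f z)
    (LinearMap.lTensor_comp_rTensor (f := r.toIntLinearMap) (g := π))
  simp only [LinearMap.coe_comp, Function.comp_apply] at h2 h3
  rw [h2, ← h3, hz, hy]
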